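/- Let F ≤ E be finite fields with E an F-vector space of dimension e, fix an F-basis of E, and let φ : E → F^{e×e} send α to the matrix, in this basis, of the F-linear map 'multiplication by α' on E. Let r, u be positive integers and let B ∈ E^{r×u} be a totally nonsingular matrix. Then the block matrix A obtained by applying φ to each entry of B (an r × u array of e × e blocks over F) is block totally nonsingular. -/

import Mathlib

/-- A matrix is totally nonsingular if every square submatrix (given by injections
selecting rows and columns) is nonsingular. -/
def IsTotallyNonsingular {F : Type*} [Field F] {r u : ℕ}
    (A : Matrix (Fin r) (Fin u) F) : Prop :=
  ∀ (k : ℕ), 1 ≤ k → ∀ (ρ : Fin k → Fin r) (σ : Fin k → Fin u),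
    Function.Injective ρ → Function.Injective σ →
      (Matrix.of fun p q : Fin k => A (ρ p) (σ q)).det ≠ 0

/-- A block matrix (an r × u array of e × e blocks) is block totally nonsingular if
every square sub-array of blocks is nonsingular. -/
def IsBlockTotallyNonsingular {F : Type*} [Field F] {r u e : ℕ}
    (A : Matrix (Fin r × Fin e) (Fin u × Fin e) F) : Prop :=
  ∀ (k : ℕ), 1 ≤ k → ∀ (ρ : Fin k → Fin r) (σ : Fin k → Fin u),
    Function.Injective ρ → Function.Injective σ →
      (Matrix.of fun p q : Fin k × Fin e => A (ρ p.1, p.2) (σ q.1, q.2)).det ≠ 0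

/-- Let F ≤ E be finite fields with E of dimension e over F, fix an
F-basis b of E, and let φ = Algebra.leftMulMatrix b.  If B ∈ E^{r×u} is totally
nonsingular, then the block matrix obtained by applying φ entrywise to B is block
totally nonsingular. -/
theorem stmt_14 {F E : Type*} [Field F] [Fintype F] [Field E] [Fintype E] [Algebra F E]
    {e r u : ℕ} (b : Module.Basis (Fin e) F E)
    (hr : 0 < r) (hu : 0 < u)
    (B : Matrix (Fin r) (Fin u) E) (hB : IsTotallyNonsingular B) :
    IsBlockTotallyNonsingular
      (Matrix.of fun (p : Fin r × Fin e) (q : Fin u × Fin e) =>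
        Algebra.leftMulMatrix b (B p.1 q.1) p.2 q.2) := by
  intro k hk ρ σ hρ hσ
  have hS : (Matrix.of fun p q : Fin k => B (ρ p) (σ q)).det ≠ 0 := hB k hk ρ σ hρ hσ
  set S : Matrix (Fin k) (Fin k) E := Matrix.of fun p q => B (ρ p) (σ q) with hSdef
  have hinv : Invertible S := S.invertibleOfIsUnitDet (isUnit_iff_ne_zero.2 hS)
  let gE : (Fin k → E) ≃ₗ[E] (Fin k → E) := S.toLinearEquiv' hinv
  let g : (Fin k → E) ≃ₗ[F] (Fin k → E) := gE.restrictScalars F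
  let β : Module.Basis (Fin k × Fin e) F (Fin k → E) :=
    (Pi.basis fun _ : Fin k => b).reindex (Equiv.sigmaEquivProd (Fin k) (Fin e))
  have hM : (Matrix.of fun p q : Fin k × Fin e =>
      (Matrix.of fun (p : Fin r × Fin e) (q : Fin u × Fin e) =>
        Algebra.leftMulMatrix b (B p.1 q.1) p.2 q.2) (ρ p.1, p.2) (σ q.1, q.2))
      = LinearMap.toMatrix β β g.toLinearMap := by
    ext ⟨i, a⟩ ⟨j, c⟩
    have hβ : β (j, c) = Pi.single j (b c) := by
      simp [β, Module.Basis.reindex_apply]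
    rw [LinearMap.toMatrix_apply, hβ]
    have hg : g.toLinearMap (Pi.single j (b c)) = fun i => S i j * b c := by
      show gE (Pi.single j (b c)) = _
      have := Matrix.toLinearEquiv'_apply S hinv
      calc gE (Pi.single j (b c)) = Matrix.toLin' S (Pi.single j (b c)) := by
            exact congrFun (congrArg DFunLike.coe this) _
        _ = S.mulVec (Pi.single j (b c)) := rfl
        _ = fun i => S i j * b c := by ext i; simp [mul_comm]
    rw [hg]
    simp only [β, Module.Basis.repr_reindex, Finsupp.mapDomain_equiv_apply,
      Equiv.sigmaEquivProd_symm_apply, Pi.basis_repr]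
    simp [hSdef, Algebra.leftMulMatrix_eq_repr_mul]
  rw [hM, LinearMap.det_toMatrix]
  exact (LinearEquiv.isUnit_det' g).ne_zero
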